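/- Let Z_1, Z_2, ... be i.i.d. standard normal and let p_n be the naive fixed-horizon p-value p_n = 2(1 − Φ(|S_n|/√n)) where S_n = Z_1 + ... + Z_n. Then for every α ∈ (0,1), the stopping rule 'reject at the first n with p_n ≤ α' rejects with probability 1; i.e., P(∃ n : p_n ≤ α) = 1. -/

import Mathlib

open MeasureTheory ProbabilityTheory Real Set
open scoped NNReal ENNReal

namespace Peeking


lemma conv_exponent (A B z x : ℝ) (hA : 0 < A) (hB : 0 < B) :
    -x^2/(2*A) + -(z-x)^2/(2*B)
      = -z^2/(2*(A+B)) + -((A+B)/(2*A*B)) * (x - A*z/(A+B))^2 := by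
  have hAB : A + B ≠ 0 := by positivity
  field_simp
  ring

lemma conv_pointwise (a b : ℝ≥0) (ha : a ≠ 0) (hb : b ≠ 0) (z x : ℝ) :
    gaussianPDFReal 0 a x * gaussianPDFReal 0 b (z - x)
      = ((√(2*π*a))⁻¹ * (√(2*π*b))⁻¹ * rexp (-z^2/(2*((a:ℝ)+b))))
        * rexp (-(((a:ℝ)+b)/(2*(a:ℝ)*b)) * (x - (a:ℝ)*z/((a:ℝ)+b))^2) := by
  have hA : 0 < (a:ℝ) := NNReal.coe_pos.mpr (pos_iff_ne_zero.mpr ha)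
  have hB : 0 < (b:ℝ) := NNReal.coe_pos.mpr (pos_iff_ne_zero.mpr hb)
  simp only [gaussianPDFReal, sub_zero]
  rw [show ((√(2*π*(a:ℝ)))⁻¹ * rexp (-x^2/(2*(a:ℝ)))) * ((√(2*π*(b:ℝ)))⁻¹ * rexp (-(z-x)^2/(2*(b:ℝ))))
      = (√(2*π*(a:ℝ)))⁻¹ * (√(2*π*(b:ℝ)))⁻¹ * (rexp (-x^2/(2*(a:ℝ))) * rexp (-(z-x)^2/(2*(b:ℝ)))) by ring,
    ← Real.exp_add, conv_exponent (a:ℝ) (b:ℝ) z x hA hB, Real.exp_add]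
  ring

lemma integrable_conv_integrand (a b : ℝ≥0) (ha : a ≠ 0) (hb : b ≠ 0) (z : ℝ) :
    Integrable (fun x => gaussianPDFReal 0 a x * gaussianPDFReal 0 b (z - x)) := by
  have hA : 0 < (a:ℝ) := NNReal.coe_pos.mpr (pos_iff_ne_zero.mpr ha)
  have hB : 0 < (b:ℝ) := NNReal.coe_pos.mpr (pos_iff_ne_zero.mpr hb)
  have hk : 0 < ((a:ℝ)+b)/(2*(a:ℝ)*b) := by positivity
  simp only [conv_pointwise a b ha hb z]
  exact ((integrable_exp_neg_mul_sq hk).comp_sub_right ((a:ℝ)*z/((a:ℝ)+b))).const_mul _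

lemma gaussianPDFReal_conv (a b : ℝ≥0) (ha : a ≠ 0) (hb : b ≠ 0) (z : ℝ) :
    ∫ x, gaussianPDFReal 0 a x * gaussianPDFReal 0 b (z - x)
      = gaussianPDFReal 0 (a + b) z := by
  have hA : 0 < (a:ℝ) := NNReal.coe_pos.mpr (pos_iff_ne_zero.mpr ha)
  have hB : 0 < (b:ℝ) := NNReal.coe_pos.mpr (pos_iff_ne_zero.mpr hb)
  have hk : 0 < ((a:ℝ)+b)/(2*(a:ℝ)*b) := by positivity
  simp only [conv_pointwise a b ha hb z]
  rw [integral_const_mul, integral_sub_right_eq_self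
      (fun x => rexp (-(((a:ℝ)+b)/(2*(a:ℝ)*b)) * x^2)) ((a:ℝ)*z/((a:ℝ)+b)),
    integral_gaussian]
  rw [gaussianPDFReal, sub_zero, NNReal.coe_add]
  rw [show ((√(2*π*(a:ℝ)))⁻¹ * (√(2*π*(b:ℝ)))⁻¹ * rexp (-z^2/(2*((a:ℝ)+b))))
        * √(π / (((a:ℝ)+b)/(2*(a:ℝ)*b)))
      = ((√(2*π*(a:ℝ)))⁻¹ * (√(2*π*(b:ℝ)))⁻¹ * √(π / (((a:ℝ)+b)/(2*(a:ℝ)*b))))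
        * rexp (-z^2/(2*((a:ℝ)+b))) by ring]
  congr 1
  rw [← Real.sqrt_inv, ← Real.sqrt_inv, ← Real.sqrt_mul (by positivity),
    ← Real.sqrt_mul (by positivity), ← Real.sqrt_inv]
  congr 1
  field_simp

lemma lintegral_gaussianPDF_conv (a b : ℝ≥0) (ha : a ≠ 0) (hb : b ≠ 0) (z : ℝ) :
    ∫⁻ x, gaussianPDF 0 a x * gaussianPDF 0 b (z - x) = gaussianPDF 0 (a + b) z := by
  simp only [gaussianPDF]
  rw [← gaussianPDFReal_conv a b ha hb z,
    ofReal_integral_eq_lintegral_ofReal (integrable_conv_integrand a b ha hb z)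
      (ae_of_all _ fun x => mul_nonneg (gaussianPDFReal_nonneg _ _ _) (gaussianPDFReal_nonneg _ _ _))]
  refine lintegral_congr fun x => ?_
  rw [ENNReal.ofReal_mul (gaussianPDFReal_nonneg _ _ _)]

lemma gaussianReal_conv (a b : ℝ≥0) :
    ((gaussianReal 0 a).prod (gaussianReal 0 b)).map (fun q : ℝ × ℝ => q.1 + q.2)
      = gaussianReal 0 (a + b) := by
  by_cases ha : a = 0
  · subst ha
    rw [gaussianReal_zero_var, Measure.dirac_prod, zero_add,
      Measure.map_map measurable_add (measurable_prodMk_left)]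
    simp [Function.comp_def]
  by_cases hb : b = 0
  · subst hb
    rw [gaussianReal_zero_var, Measure.prod_dirac, add_zero,
      Measure.map_map measurable_add (measurable_prodMk_right)]
    simp [Function.comp_def]
  have hab : a + b ≠ 0 := by simp [ha]
  ext s hs
  rw [Measure.map_apply measurable_add hs,
    Measure.prod_apply (measurable_add hs)]
  have h1 : ∀ x : ℝ, gaussianReal 0 b (Prod.mk x ⁻¹' ((fun q : ℝ × ℝ => q.1 + q.2) ⁻¹' s))
      = ∫⁻ z in s, gaussianPDF 0 b (z - x) := by
    intro x
    have : Prod.mk x ⁻¹' ((fun q : ℝ × ℝ => q.1 + q.2) ⁻¹' s) = (fun y => x + y) ⁻¹' s := rfl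
    rw [this, ← Measure.map_apply (measurable_const_add x) hs, gaussianReal_map_const_add,
      zero_add, gaussianReal_apply _ hb]
    refine setLIntegral_congr_fun hs (fun z _ => ?_)
    rw [gaussianPDF, gaussianPDF, gaussianPDFReal_sub, zero_add]
  simp_rw [h1]
  have hm2 : Measurable fun x : ℝ => ∫⁻ z in s, gaussianPDF 0 b (z - x) := by
    refine Measurable.lintegral_prod_right (f := fun x z => gaussianPDF 0 b (z - x)) ?_
    exact (measurable_gaussianPDF 0 b).comp (measurable_snd.sub measurable_fst)
  rw [gaussianReal_of_var_ne_zero _ ha, gaussianReal_of_var_ne_zero _ hab,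
    lintegral_withDensity_eq_lintegral_mul _ (measurable_gaussianPDF _ _) hm2,
    withDensity_apply _ hs]
  have h2 : ∀ x : ℝ, (gaussianPDF 0 a * fun x => ∫⁻ z in s, gaussianPDF 0 b (z - x)) x
      = ∫⁻ z in s, gaussianPDF 0 a x * gaussianPDF 0 b (z - x) := by
    intro x
    simp only [Pi.mul_apply]
    exact (lintegral_const_mul _ ((measurable_gaussianPDF 0 b).comp (measurable_id'.sub_const x))).symm
  simp_rw [h2]
  rw [lintegral_lintegral_swap]
  · exact lintegral_congr fun z => lintegral_gaussianPDF_conv a b ha hb z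
  · exact ((measurable_gaussianPDF 0 a).comp measurable_fst |>.mul
      ((measurable_gaussianPDF 0 b).comp (measurable_snd.sub measurable_fst))).aemeasurable
lemma map_finset_sum {Ω : Type*} {m : MeasurableSpace Ω} {P : Measure Ω} [IsProbabilityMeasure P]
    (Z : ℕ → Ω → ℝ) (hZmeas : ∀ i, Measurable (Z i))
    (hiid : iIndepFun Z P)
    (hlaw : ∀ i, P.map (Z i) = gaussianReal 0 1) (s : Finset ℕ) :
    P.map (fun ω => ∑ i ∈ s, Z i ω) = gaussianReal 0 s.card := by
  induction s using Finset.cons_induction_on with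
  | empty =>
    simp only [Finset.sum_empty, Finset.card_empty]
    rw [show ((0:ℕ) : ℝ≥0) = 0 by simp, gaussianReal_zero_var, Measure.map_const,
      measure_univ, one_smul]
  | cons _ _ ha ih =>
    rename_i a s
    have hsum : Measurable fun ω => ∑ i ∈ s, Z i ω := Finset.measurable_sum s fun i _ => hZmeas i
    have hIF : IndepFun (Z a) (fun ω => ∑ i ∈ s, Z i ω) P := by
      have := (hiid.indepFun_finset_sum_of_notMem hZmeas ha).symm
      have he : (∑ j ∈ s, Z j) = fun ω => ∑ i ∈ s, Z i ω := by
        funext ω; simp [Finset.sum_apply]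
      rwa [he] at this
    have hmap : P.map (fun ω => (Z a ω, ∑ i ∈ s, Z i ω))
        = (P.map (Z a)).prod (P.map (fun ω => ∑ i ∈ s, Z i ω)) :=
      (indepFun_iff_map_prod_eq_prod_map_map (hZmeas a).aemeasurable hsum.aemeasurable).mp hIF
    have : (fun ω => ∑ i ∈ Finset.cons a s ha, Z i ω)
        = (fun q : ℝ × ℝ => q.1 + q.2) ∘ (fun ω => (Z a ω, ∑ i ∈ s, Z i ω)) := by
      funext ω; simp [Finset.sum_cons, Finset.sum_insert ha]
    rw [this, ← Measure.map_map measurable_add ((hZmeas a).prodMk hsum), hmap, hlaw a, ih,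
      gaussianReal_conv, Finset.card_cons]
    push_cast
    rw [add_comm]
lemma indep_step {Ω : Type*} {m : MeasurableSpace Ω} {P : Measure Ω} [IsProbabilityMeasure P]
    (Z : ℕ → Ω → ℝ) (hZmeas : ∀ i, Measurable (Z i))
    (hiid : iIndepFun Z P)
    (t : ℕ → ℝ) (K : ℕ) :
    P ({ω | ∑ i ∈ Finset.Ico (2^K) (2^(K+1)), Z i ω < t K}
        ∩ ⋂ k ∈ Finset.range K, {ω | ∑ i ∈ Finset.Ico (2^k) (2^(k+1)), Z i ω < t k})
      = P {ω | ∑ i ∈ Finset.Ico (2^K) (2^(K+1)), Z i ω < t K}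
        * P (⋂ k ∈ Finset.range K, {ω | ∑ i ∈ Finset.Ico (2^k) (2^(k+1)), Z i ω < t k}) := by
  classical
  set Tf : Finset ℕ := Finset.Ico (2^K) (2^(K+1)) with hTf
  set Sf : Finset ℕ := Finset.range (2^K) with hSf
  have hdisj : Disjoint Tf Sf := by
    rw [Finset.disjoint_left]
    intro i hi hi'
    simp only [hTf, Finset.mem_Ico] at hi
    simp only [hSf, Finset.mem_range] at hi'
    omega
  have hind := hiid.indepFun_finset Tf Sf hdisj hZmeas
  -- functions on tuples
  set ψ : (↥Tf → ℝ) → ℝ := fun v => ∑ i : ↥Tf, v i with hψ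
  have hψm : Measurable ψ := Finset.measurable_sum _ fun i _ => measurable_pi_apply i
  set φ : ℕ → (↥Sf → ℝ) → ℝ := fun k v =>
    ∑ i ∈ Finset.univ.filter (fun i : ↥Sf => (i : ℕ) ∈ Finset.Ico (2^k) (2^(k+1))), v i with hφ
  have hφm : ∀ k, Measurable (φ k) := fun k =>
    Finset.measurable_sum _ fun i _ => measurable_pi_apply i
  set B : Set (↥Sf → ℝ) := ⋂ k ∈ Finset.range K, {v | φ k v < t k} with hB
  have hBm : MeasurableSet B := by
    refine MeasurableSet.biInter (Finset.range K).countable_toSet fun k _ => ?_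
    exact measurableSet_lt (hφm k) measurable_const
  -- identification of preimages
  have hTeq : (fun ω (i : ↥Tf) => Z i ω) ⁻¹' {v | ψ v < t K}
      = {ω | ∑ i ∈ Tf, Z i ω < t K} := by
    ext ω
    simp only [Set.mem_preimage, Set.mem_setOf_eq, hψ]
    rw [Finset.sum_coe_sort Tf (fun i => Z i ω)]
  have hsum_eq : ∀ k, k < K → ∀ ω, φ k (fun i : ↥Sf => Z i ω)
      = ∑ i ∈ Finset.Ico (2^k) (2^(k+1)), Z i ω := by
    intro k hk ω
    have hsub : Finset.Ico (2^k) (2^(k+1)) ⊆ Sf := by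
      intro i hi
      simp only [Finset.mem_Ico] at hi
      simp only [hSf, Finset.mem_range]
      calc i < 2^(k+1) := hi.2
        _ ≤ 2^K := Nat.pow_le_pow_right (by norm_num) hk
    calc φ k (fun i : ↥Sf => Z i ω)
        = ∑ i : ↥Sf, if (i : ℕ) ∈ Finset.Ico (2^k) (2^(k+1)) then Z i ω else 0 := by
          rw [hφ]; simp [Finset.sum_filter]
      _ = ∑ i ∈ Sf, if i ∈ Finset.Ico (2^k) (2^(k+1)) then Z i ω else 0 := by
          rw [Finset.sum_coe_sort Sf (fun i => if i ∈ Finset.Ico (2^k) (2^(k+1)) then Z i ω else 0)]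
      _ = ∑ i ∈ Sf.filter (· ∈ Finset.Ico (2^k) (2^(k+1))), Z i ω := by
          rw [Finset.sum_filter]
      _ = ∑ i ∈ Finset.Ico (2^k) (2^(k+1)), Z i ω := by
          rw [Finset.filter_mem_eq_inter, Finset.inter_eq_right.mpr hsub]
  have hBeq : (fun ω (i : ↥Sf) => Z i ω) ⁻¹' B
      = ⋂ k ∈ Finset.range K, {ω | ∑ i ∈ Finset.Ico (2^k) (2^(k+1)), Z i ω < t k} := by
    ext ω
    simp only [hB, Set.preimage_iInter, Set.mem_iInter, Set.mem_preimage, Set.mem_setOf_eq,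
      Finset.mem_range]
    exact forall_congr' fun k => forall_congr' fun hk => by rw [hsum_eq k hk ω]
  have := indepFun_iff_measure_inter_preimage_eq_mul.mp hind
    {v | ψ v < t K} B (measurableSet_lt hψm measurable_const) hBm
  rw [hTeq, hBeq] at this
  exact this

lemma gaussianReal_Ici_scale (v : ℝ≥0) (hv : v ≠ 0) (l : ℝ) :
    gaussianReal 0 v (Ici (l * √(v:ℝ))) = gaussianReal 0 1 (Ici l) := by
  have hvpos : (0:ℝ) < v := NNReal.coe_pos.mpr (pos_iff_ne_zero.mpr hv)
  have hs : (0:ℝ) < √(v:ℝ) := Real.sqrt_pos.mpr hvpos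
  have hmap : (gaussianReal 0 1).map (fun x => √(v:ℝ) * x) = gaussianReal 0 v := by
    rw [show (fun x => √(v:ℝ) * x) = (√(v:ℝ) * ·) by rfl, gaussianReal_map_const_mul]
    congr 1
    · simp
    · ext
      simp [Real.sq_sqrt v.2]
  rw [← hmap, Measure.map_apply (measurable_const_mul _) measurableSet_Ici]
  congr 1
  ext x
  simp only [Set.mem_preimage, Set.mem_Ici]
  rw [mul_comm l, mul_le_mul_iff_right₀ hs]

lemma gaussianReal_Ici_ne_zero (x : ℝ) : gaussianReal 0 1 (Ici x) ≠ 0 := by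
  intro h
  have := gaussianReal_absolutelyContinuous' 0 one_ne_zero h
  rw [Real.volume_Ici] at this
  simp at this

lemma Phi_mono (Φ : ℝ → ℝ) (hΦ : ∀ x, Φ x = ((gaussianReal 0 1) (Set.Iic x)).toReal) :
    Monotone Φ := by
  intro x y hxy
  rw [hΦ, hΦ]
  exact ENNReal.toReal_mono (measure_ne_top _ _) (measure_mono (Set.Iic_subset_Iic.mpr hxy))

lemma Phi_tendsto (Φ : ℝ → ℝ) (hΦ : ∀ x, Φ x = ((gaussianReal 0 1) (Set.Iic x)).toReal) :
    Filter.Tendsto Φ Filter.atTop (nhds 1) := by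
  have h1 : Filter.Tendsto (fun x => gaussianReal 0 1 (Set.Iic x)) Filter.atTop
      (nhds (gaussianReal 0 1 Set.univ)) := tendsto_measure_Iic_atTop _
  rw [measure_univ] at h1
  have h2 := (ENNReal.tendsto_toReal ENNReal.one_ne_top).comp h1
  have : Φ = fun x => ((gaussianReal 0 1) (Set.Iic x)).toReal := funext hΦ
  rw [this]
  simpa [Function.comp_def] using h2


end Peeking

open MeasureTheory ProbabilityTheory

/-- Continuously monitoring the naive fixed-horizon p-value
`p n = 2 (1 - Φ(|S n|/√n))` of i.i.d. standard normal observations and stopping the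
first time it drops below `α` rejects with probability 1, for every `α ∈ (0,1)`. -/
theorem naive_peeking_has_type_I_error_one
    {Ω : Type*} {m : MeasurableSpace Ω} {P : Measure Ω} [IsProbabilityMeasure P]
    (Z : ℕ → Ω → ℝ) (hZmeas : ∀ i, Measurable (Z i))
    (hiid : iIndepFun Z P)
    (hlaw : ∀ i, P.map (Z i) = gaussianReal 0 1)
    (Φ : ℝ → ℝ) (hΦ : ∀ x, Φ x = ((gaussianReal 0 1) (Set.Iic x)).toReal)
    (S : ℕ → Ω → ℝ) (hS : ∀ n ω, S n ω = ∑ i ∈ Finset.range n, Z i ω)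
    (p : ℕ → Ω → ℝ)
    (hp : ∀ n ω, p n ω = 2 * (1 - Φ (|S n ω| / Real.sqrt n)))
    {α : ℝ} (hα : α ∈ Set.Ioo (0 : ℝ) 1) :
    P {ω | ∃ n : ℕ, 1 ≤ n ∧ p n ω ≤ α} = 1 := by
  classical
  obtain ⟨hα0, hα1⟩ := hα
  have hΦm := Peeking.Phi_mono Φ hΦ
  -- choose a nonnegative threshold c with 1 - α/2 < Φ c
  have hev : ∀ᶠ x in Filter.atTop, 1 - α/2 < Φ x :=
    (Peeking.Phi_tendsto Φ hΦ).eventually (eventually_gt_nhds (by linarith))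
  obtain ⟨c, hc1, hc0⟩ := (hev.and (Filter.eventually_ge_atTop 0)).exists
  set l : ℝ := 2 * Real.sqrt 2 * c with hl
  have hl0 : 0 ≤ l := by positivity
  set t : ℕ → ℝ := fun k => l * Real.sqrt ((2:ℝ)^k) with ht
  set A : ℕ → Set Ω := fun k => {ω | t k ≤ ∑ i ∈ Finset.Ico (2^k) (2^(k+1)), Z i ω} with hA
  set ε : ℝ≥0∞ := gaussianReal 0 1 (Set.Ici l) with hε
  have hε0 : ε ≠ 0 := Peeking.gaussianReal_Ici_ne_zero l
  have hTmeas : ∀ k, Measurable fun ω => ∑ i ∈ Finset.Ico (2^k) (2^(k+1)), Z i ω :=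
    fun k => Finset.measurable_sum _ fun i _ => hZmeas i
  have hAm : ∀ k, MeasurableSet (A k) := fun k => measurableSet_le measurable_const (hTmeas k)
  -- each block event has probability ε
  have hTlaw : ∀ k : ℕ, P.map (fun ω => ∑ i ∈ Finset.Ico (2^k) (2^(k+1)), Z i ω)
      = gaussianReal 0 ((2:ℝ≥0)^k) := by
    intro k
    rw [Peeking.map_finset_sum Z hZmeas hiid hlaw]
    congr 1
    rw [Nat.card_Ico]
    have h2 : 2^(k+1) - 2^k = 2^k := by rw [pow_succ]; omega
    rw [h2]
    push_cast
    ring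
  have hPA : ∀ k, P (A k) = ε := by
    intro k
    have hAeq : A k = (fun ω => ∑ i ∈ Finset.Ico (2^k) (2^(k+1)), Z i ω) ⁻¹' Set.Ici (t k) := rfl
    rw [hAeq, ← Measure.map_apply (hTmeas k) measurableSet_Ici, hTlaw k]
    show (gaussianReal 0 ((2:ℝ≥0)^k)) (Set.Ici (l * Real.sqrt ((2:ℝ)^k))) = ε
    rw [show ((2:ℝ)^k) = (((2:ℝ≥0)^k : ℝ≥0) : ℝ) by push_cast; ring]
    exact Peeking.gaussianReal_Ici_scale _ (pow_ne_zero k two_ne_zero) l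
  -- each block event implies rejection
  have hsub : ∀ k, A k ⊆ {ω | ∃ n : ℕ, 1 ≤ n ∧ p n ω ≤ α} := by
    intro k ω hω
    simp only [hA, Set.mem_setOf_eq] at hω
    have hTS : ∑ i ∈ Finset.Ico (2^k) (2^(k+1)), Z i ω = S (2^(k+1)) ω - S (2^k) ω := by
      rw [hS, hS]
      exact Finset.sum_Ico_eq_sub _ (Nat.pow_le_pow_right (by norm_num) (Nat.le_succ k))
    have hsqrt : Real.sqrt ((2:ℝ)^(k+1)) = Real.sqrt 2 * Real.sqrt ((2:ℝ)^k) := by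
      rw [pow_succ, mul_comm ((2:ℝ)^k) 2, Real.sqrt_mul (by norm_num)]
    have hkey : c * Real.sqrt ((2:ℝ)^(k+1)) ≤ |S (2^k) ω|
        ∨ c * Real.sqrt ((2:ℝ)^(k+1)) ≤ |S (2^(k+1)) ω| := by
      by_contra hcon
      push_neg at hcon
      have hle : ∑ i ∈ Finset.Ico (2^k) (2^(k+1)), Z i ω ≤ |S (2^(k+1)) ω| + |S (2^k) ω| := by
        rw [hTS]
        exact (le_abs_self _).trans (abs_sub _ _)
      have htk : t k = 2 * (c * Real.sqrt ((2:ℝ)^(k+1))) := by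
        rw [ht, hsqrt, hl]; ring
      rw [htk] at hω
      linarith [hcon.1, hcon.2]
    have main : ∀ n : ℕ, 1 ≤ n → c ≤ |S n ω| / Real.sqrt (n:ℝ) → p n ω ≤ α := by
      intro n hn hcn
      rw [hp]
      have h2 : 1 - α/2 < Φ (|S n ω| / Real.sqrt (n:ℝ)) := lt_of_lt_of_le hc1 (hΦm hcn)
      linarith
    have hmono : Real.sqrt ((2:ℝ)^k) ≤ Real.sqrt ((2:ℝ)^(k+1)) :=
      Real.sqrt_le_sqrt (pow_le_pow_right₀ (one_le_two) (Nat.le_succ k))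
    rcases hkey with h | h
    · refine ⟨2^k, Nat.one_le_two_pow, main _ Nat.one_le_two_pow ?_⟩
      rw [le_div_iff₀ (by positivity : (0:ℝ) < Real.sqrt (((2:ℕ)^k : ℕ) : ℝ))]
      push_cast
      calc c * Real.sqrt ((2:ℝ)^k) ≤ c * Real.sqrt ((2:ℝ)^(k+1)) :=
            mul_le_mul_of_nonneg_left hmono hc0
        _ ≤ |S (2^k) ω| := h
    · refine ⟨2^(k+1), Nat.one_le_two_pow, main _ Nat.one_le_two_pow ?_⟩
      rw [le_div_iff₀ (by positivity : (0:ℝ) < Real.sqrt (((2:ℕ)^(k+1) : ℕ) : ℝ))]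
      push_cast
      exact h
  -- probability of avoiding all block events up to K decays geometrically
  have hPAc : ∀ k, P ((A k)ᶜ) = 1 - ε := fun k => by
    rw [prob_compl_eq_one_sub (hAm k), hPA k]
  have hAc : ∀ k, (A k)ᶜ = {ω | ∑ i ∈ Finset.Ico (2^k) (2^(k+1)), Z i ω < t k} := by
    intro k
    ext ω
    simp [hA, not_le]
  have hE : ∀ K : ℕ, P (⋂ k ∈ Finset.range K, (A k)ᶜ) ≤ (1 - ε)^K := by
    intro K
    induction K with
    | zero => simp
    | succ K ih =>
      rw [Finset.range_add_one, Finset.set_biInter_insert]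
      have hstep := Peeking.indep_step Z hZmeas hiid t K
      simp_rw [← hAc] at hstep
      rw [hstep]
      calc P ((A K)ᶜ) * P (⋂ k ∈ Finset.range K, (A k)ᶜ)
          ≤ (1 - ε) * (1 - ε)^K := by
            rw [hPAc K]
            exact mul_le_mul_right ih _
        _ = (1 - ε)^(K+1) := by rw [pow_succ]; ring
  have hlim : Filter.Tendsto (fun K => (1 - ε)^K) Filter.atTop (nhds 0) :=
    ENNReal.tendsto_pow_atTop_nhds_zero_of_lt_one
      (ENNReal.sub_lt_self ENNReal.one_ne_top one_ne_zero hε0)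
  have hIA : P (⋂ k, (A k)ᶜ) = 0 := by
    refine le_antisymm ?_ zero_le
    refine ge_of_tendsto' hlim fun K => ?_
    exact le_trans (measure_mono (Set.subset_iInter₂ fun k _ => Set.iInter_subset _ k)) (hE K)
  have hU : (1 : ℝ≥0∞) ≤ P (⋃ k, A k) + P (⋂ k, (A k)ᶜ) := by
    calc (1:ℝ≥0∞) = P Set.univ := measure_univ.symm
      _ = P ((⋃ k, A k) ∪ (⋃ k, A k)ᶜ) := by rw [Set.union_compl_self]
      _ ≤ P (⋃ k, A k) + P ((⋃ k, A k)ᶜ) := measure_union_le _ _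
      _ = P (⋃ k, A k) + P (⋂ k, (A k)ᶜ) := by rw [Set.compl_iUnion]
  rw [hIA, add_zero] at hU
  refine le_antisymm prob_le_one ?_
  exact le_trans hU (measure_mono (Set.iUnion_subset hsub))
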